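/- Let G be a group, let G' be a finite-index subgroup of G, and let H' be a subgroup of G'. Then H' is separable in G' (as a subgroup of the group G') if and only if H' (viewed as a subgroup of G) is separable in G. -/
import Mathlib

/-- A subgroup `H` of a group `G` is separable in `G` if for every `g ∈ G` with `g ∉ H`
there exists a finite-index subgroup `K` of `G` with `H ≤ K` and `g ∉ K`. -/
def SubgroupSeparable {G : Type*} [Group G] (H : Subgroup G) : Prop :=
  ∀ g : G, g ∉ H → ∃ K : Subgroup G, K.FiniteIndex ∧ H ≤ K ∧ g ∉ K

/-- If `G'` is a finite-index subgroup of `G` and `H' ≤ G'`, then `H'` is separable in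
the group `G'` if and only if `H'` is separable in `G`. -/
theorem separable_iff_separable_in_finiteIndex {G : Type*} [Group G] (G' : Subgroup G)
    (hG' : G'.FiniteIndex) (H' : Subgroup G) (hle : H' ≤ G') :
    SubgroupSeparable (H'.subgroupOf G') ↔ SubgroupSeparable H' := by
  constructor
  · intro hsep g hg
    by_cases hgG' : g ∈ G'
    · obtain ⟨K', hK'fi, hK'le, hgK'⟩ := hsep ⟨g, hgG'⟩ (by simpa [Subgroup.mem_subgroupOf])
      refine ⟨K'.map G'.subtype, ?_, ?_, ?_⟩
      · constructor
        rw [Subgroup.index_map_subtype]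
        exact mul_ne_zero hK'fi.index_ne_zero hG'.index_ne_zero
      · intro h hh
        exact ⟨⟨h, hle hh⟩, hK'le (by simpa [Subgroup.mem_subgroupOf]), rfl⟩
      · rintro ⟨⟨x, hx⟩, hxK', rfl⟩
        exact hgK' hxK'
    · exact ⟨G', hG', hle, hgG'⟩
  · intro hsep g hg
    obtain ⟨K, hKfi, hKle, hgK⟩ := hsep g.1 (by simpa [Subgroup.mem_subgroupOf] using hg)
    exact ⟨K.subgroupOf G', inferInstance, fun h hh => hKle hh, hgK⟩
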